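/- (John's lemma) Let Ω ⊂ ℝ^d be a compact convex set with nonempty interior. Then there exists an invertible affine transformation T : ℝ^d → ℝ^d such that B(0,1) ⊆ T^{-1}(Ω) ⊆ B(0,d). -/

import Mathlib

open Metric Finset InnerProductSpace

set_option maxHeartbeats 1000000

lemma det_of_eigen {d : ℕ} (hd : 0 < d) (u : EuclideanSpace ℝ (Fin d)) (hu : ‖u‖ = 1)
    (f : EuclideanSpace ℝ (Fin d) →ₗ[ℝ] EuclideanSpace ℝ (Fin d)) (a b : ℝ)
    (hfu : f u = a • u) (hfy : ∀ y, ⟪u, y⟫_ℝ = 0 → f y = b • y) :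
    LinearMap.det f = a * b ^ (d - 1) := by
  have hcard : Module.finrank ℝ (EuclideanSpace ℝ (Fin d)) = Fintype.card (Fin d) := by
    simp [finrank_euclideanSpace_fin]
  have : NeZero d := ⟨hd.ne'⟩
  have horth : Orthonormal ℝ (Set.restrict {(0 : Fin d)} (fun _ => u)) := by
    constructor
    · intro i; exact hu
    · intro i j hij
      exact absurd (Subtype.ext ((Set.mem_singleton_iff.1 i.2).trans
        (Set.mem_singleton_iff.1 j.2).symm)) hij
  obtain ⟨β, hβ⟩ := horth.exists_orthonormalBasis_extension_of_card_eq hcard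
  have hβ0 : β 0 = u := hβ 0 rfl
  have heig : ∀ j : Fin d, f (β j) = (if j = 0 then a else b) • β j := by
    intro j
    by_cases hj : j = 0
    · simp [hj, hβ0, hfu]
    · have : ⟪u, β j⟫_ℝ = 0 := by
        rw [← hβ0]
        exact β.orthonormal.2 (Ne.symm hj)
      simp [hj, hfy _ this]
  have hmat : LinearMap.toMatrix β.toBasis β.toBasis f
      = Matrix.diagonal (fun j => if j = 0 then a else b) := by
    ext i j
    rw [LinearMap.toMatrix_apply,
      show f (β.toBasis j) = (if j = 0 then a else b) • β.toBasis j by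
        rw [OrthonormalBasis.coe_toBasis]; exact heig j,
      map_smul, Module.Basis.repr_self]
    simp only [Finsupp.smul_single, smul_eq_mul, mul_one, Finsupp.single_apply,
      Matrix.diagonal]
    by_cases h : j = i
    · subst h; simp
    · simp [h, Ne.symm h]
  have hdet := LinearMap.det_toMatrix β.toBasis f
  rw [hmat, Matrix.det_diagonal] at hdet
  rw [← hdet, ← Finset.mul_prod_erase univ _ (mem_univ (0 : Fin d)), if_pos rfl]
  congr 1
  rw [Finset.prod_congr rfl (fun i hi => by rw [if_neg (Finset.mem_erase.1 hi).1]),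
    Finset.prod_const]
  congr 1
  simp [Finset.card_erase_of_mem]


lemma arith_step (D s ε a b : ℝ) (n : ℕ) (hn : (n : ℝ) = D - 1) (hD1 : 1 ≤ D) (hs : D < s)
    (hεeq : ε * (2 * D * (s - 1)) = s - D) (hε0 : 0 < ε) (hε1 : ε < 1)
    (ha : a = 1 + ε * (s - 1) / 2) (hb0 : 0 < b) (hb2 : b ^ 2 = 1 - ε) :
    1 < a * b ^ n := by
  have hs1 : 1 < s := lt_of_le_of_lt hD1 hs
  have hDpos : (0:ℝ) < D := by linarith
  have ha1 : 1 ≤ a := by rw [ha]; nlinarith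
  have hbpos : 0 < b ^ n := pow_pos hb0 _
  have hX2 : (b ^ n) ^ 2 = (1 - ε) ^ n := by rw [← pow_mul, mul_comm n 2, pow_mul, hb2]
  have hbern : 1 - (D - 1) * ε ≤ (1 - ε) ^ n := by
    have h := one_add_mul_le_pow (show (-2:ℝ) ≤ -ε by linarith) n
    rw [hn, show (1:ℝ) + -ε = 1 - ε from by ring] at h
    linarith
  have key2 : (D - 1) * ε * (s - 1) * (2 * D) = (D - 1) * (s - D) := by
    linear_combination (D - 1) * hεeq
  have hC : (D - 1) * ε * (s - 1) ≤ (s - D) / 2 := by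
    nlinarith [key2, hDpos, hs, hD1]
  have h12 : (1:ℝ)/2 ≤ 1 - (D - 1) * ε := by nlinarith [hC, hs1, hs]
  have ha2 : 1 + ε * (s - 1) ≤ a ^ 2 := by rw [ha]; nlinarith
  have hmid : 1 < (1 + ε * (s - 1)) * (1 - (D - 1) * ε) := by
    nlinarith [mul_le_mul_of_nonneg_left hC (le_of_lt hε0),
      mul_pos hε0 (show (0:ℝ) < (s - D) / 2 by linarith)]
  have hsq : 1 < (a * b ^ n) ^ 2 := by
    have e1 : (a * b ^ n) ^ 2 = a ^ 2 * (1 - ε) ^ n := by rw [mul_pow, hX2]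
    rw [e1]
    calc (1:ℝ) < (1 + ε * (s - 1)) * (1 - (D - 1) * ε) := hmid
    _ ≤ a ^ 2 * (1 - (D - 1) * ε) := by
        apply mul_le_mul_of_nonneg_right ha2 (by linarith)
    _ ≤ a ^ 2 * (1 - ε) ^ n := by
        apply mul_le_mul_of_nonneg_left hbern (by positivity)
  nlinarith [hsq, mul_pos (show (0:ℝ) < a by linarith) hbpos]

lemma key_step {d : ℕ} (hd : 0 < d) (K : Set (EuclideanSpace ℝ (Fin d)))
    (hK : Convex ℝ K) (hB : Metric.closedBall 0 1 ⊆ K) {z : EuclideanSpace ℝ (Fin d)}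
    (hz : z ∈ K) (hzn : (d : ℝ) < ‖z‖) :
    ∃ (N : EuclideanSpace ℝ (Fin d) →L[ℝ] EuclideanSpace ℝ (Fin d))
      (w : EuclideanSpace ℝ (Fin d)),
      (∀ x ∈ Metric.closedBall (0 : EuclideanSpace ℝ (Fin d)) 1, N x + w ∈ K) ∧
      1 < |LinearMap.det (N : EuclideanSpace ℝ (Fin d) →ₗ[ℝ] EuclideanSpace ℝ (Fin d))| := by
  have hd1 : (1 : ℝ) ≤ d := by exact_mod_cast hd
  set s : ℝ := ‖z‖ with hs_def
  have hs1 : 1 < s := lt_of_le_of_lt hd1 hzn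
  have hs0 : s ≠ 0 := by positivity
  set u : EuclideanSpace ℝ (Fin d) := s⁻¹ • z with hu_def
  have hzu : z = s • u := by rw [hu_def, smul_inv_smul₀ hs0]
  have hu : ‖u‖ = 1 := by
    rw [hu_def, norm_smul, norm_inv, Real.norm_eq_abs, abs_of_pos (by linarith : (0:ℝ) < s)]
    field_simp
    exact hs_def.symm
  set ε : ℝ := (s - d) / (2 * d * (s - 1)) with hε_def
  have hε0 : 0 < ε := by
    apply div_pos (by linarith)
    have : (0:ℝ) < d := by linarith
    nlinarith
  have hε1 : ε < 1 := by
    rw [hε_def, div_lt_one (by nlinarith)]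
    nlinarith
  set a : ℝ := 1 + ε * (s - 1) / 2 with ha_def
  set c : ℝ := ε * (s - 1) / 2 with hc_def
  set b : ℝ := Real.sqrt (1 - ε) with hb_def
  have hb2 : b ^ 2 = 1 - ε := Real.sq_sqrt (by linarith)
  have hb0 : 0 < b := Real.sqrt_pos.2 (by linarith)
  have ha1 : 1 ≤ a := by rw [ha_def]; nlinarith
  set N : EuclideanSpace ℝ (Fin d) →L[ℝ] EuclideanSpace ℝ (Fin d) :=
    b • (1 : EuclideanSpace ℝ (Fin d) →L[ℝ] EuclideanSpace ℝ (Fin d))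
      + (a - b) • ((innerSL ℝ u).smulRight u) with hN_def
  have hNapp : ∀ x, N x = b • x + ((a - b) * ⟪u, x⟫_ℝ) • u := by
    intro x
    simp [hN_def, ContinuousLinearMap.smulRight_apply, smul_smul]
  set w : EuclideanSpace ℝ (Fin d) := c • u with hw_def
  refine ⟨N, w, ?_, ?_⟩
  · -- containment
    intro x hx
    rw [mem_closedBall, dist_zero_right] at hx
    set t : ℝ := ⟪u, x⟫_ℝ with ht_def
    set y : EuclideanSpace ℝ (Fin d) := x - t • u with hy_def
    have hxy : x = t • u + y := by rw [hy_def]; abel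
    have hy : ⟪u, y⟫_ℝ = 0 := by
      rw [hy_def, inner_sub_right, real_inner_smul_right, real_inner_self_eq_norm_sq, hu]
      ring
    have hx2 : t ^ 2 + ‖y‖ ^ 2 ≤ 1 := by
      have : ‖x‖ ^ 2 = t ^ 2 + ‖y‖ ^ 2 := by
        rw [hxy, norm_add_sq_real, real_inner_smul_left, hy, norm_smul, Real.norm_eq_abs,
          hu, mul_one, sq_abs]
        ring
      nlinarith [norm_nonneg x]
    have ht1 : |t| ≤ 1 := by
      calc |t| ≤ ‖u‖ * ‖x‖ := abs_real_inner_le_norm u x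
      _ ≤ 1 := by rw [hu, one_mul]; exact hx
    have ht1' : -1 ≤ t ∧ t ≤ 1 := abs_le.1 ht1
    set l : ℝ := ε * (t + 1) / 2 with hl_def
    have hl0 : 0 ≤ l := by rw [hl_def]; nlinarith [ht1'.1]
    have hl1 : l < 1 := by
      rw [hl_def]; nlinarith [ht1'.2]
    have hid : (a * t + c - l * s) ^ 2 + (1 - ε) * (1 - t ^ 2) = (1 - l) ^ 2 := by
      rw [ha_def, hc_def, hl_def]; ring
    have hv : N x + w - l • z = (a * t + c - l * s) • u + b • y := by
      rw [hNapp x, ← ht_def]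
      nth_rewrite 1 [hxy]
      rw [hzu]
      module
    have hvnorm : ‖N x + w - l • z‖ ^ 2 ≤ (1 - l) ^ 2 := by
      have e1 : ‖(a * t + c - l * s) • u + b • y‖ ^ 2
          = (a * t + c - l * s) ^ 2 + b ^ 2 * ‖y‖ ^ 2 := by
        simp only [norm_add_sq_real, real_inner_smul_left, real_inner_smul_right, hy,
          norm_smul, Real.norm_eq_abs, hu, mul_one, mul_zero, mul_pow, sq_abs, add_zero]
      rw [hv, e1]
      have h1 : b ^ 2 * ‖y‖ ^ 2 ≤ (1 - ε) * (1 - t ^ 2) := by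
        rw [hb2]
        have h2 : ‖y‖ ^ 2 ≤ 1 - t ^ 2 := by linarith
        nlinarith
      nlinarith
    have hvn : ‖N x + w - l • z‖ ≤ 1 - l := by
      nlinarith [norm_nonneg (N x + w - l • z)]
    set m : EuclideanSpace ℝ (Fin d) := (1 - l)⁻¹ • (N x + w - l • z) with hm_def
    have h1l : (0:ℝ) < 1 - l := by linarith
    have hmK : m ∈ K := by
      apply hB
      rw [mem_closedBall, dist_zero_right, hm_def, norm_smul, norm_inv, Real.norm_eq_abs,
        abs_of_pos h1l]
      rw [inv_mul_le_iff₀ h1l, mul_one]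
      exact hvn
    have hcomb : N x + w = l • z + (1 - l) • m := by
      rw [hm_def, smul_inv_smul₀ (by linarith : (1:ℝ) - l ≠ 0)]
      abel
    rw [hcomb]
    exact hK hz hmK hl0 (by linarith) (by ring)
  · -- determinant
    have hdet : LinearMap.det
        (N : EuclideanSpace ℝ (Fin d) →ₗ[ℝ] EuclideanSpace ℝ (Fin d)) = a * b ^ (d - 1) := by
      apply det_of_eigen hd u hu _ a b
      · show N u = a • u
        rw [hNapp u, real_inner_self_eq_norm_sq, hu]
        module
      · intro y hy
        show N y = b • y
        rw [hNapp y, hy, mul_zero, zero_smul, add_zero]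
    rw [hdet]
    have hd1 : (1:ℝ) ≤ (d:ℝ) := by exact_mod_cast hd
    have hn : ((d - 1 : ℕ) : ℝ) = (d:ℝ) - 1 := by push_cast [Nat.cast_sub hd]; ring
    have hεeq : ε * (2 * (d:ℝ) * (s - 1)) = s - (d:ℝ) := by
      rw [hε_def]
      rw [div_mul_cancel₀ _ (by nlinarith : 2 * (d:ℝ) * (s - 1) ≠ 0)]
    have := arith_step (d:ℝ) s ε a b (d - 1) hn hd1 hzn hεeq hε0 hε1 ha_def hb0 hb2
    rw [abs_of_pos (by nlinarith [pow_pos hb0 (d-1)] : (0:ℝ) < a * b ^ (d-1))]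
    exact this

theorem stmt_5 (d : ℕ) (hd : 0 < d) (Ω : Set (EuclideanSpace ℝ (Fin d)))
    (hcomp : IsCompact Ω) (hconv : Convex ℝ Ω) (hint : (interior Ω).Nonempty) :
    ∃ T : EuclideanSpace ℝ (Fin d) ≃ᵃ[ℝ] EuclideanSpace ℝ (Fin d),
      Metric.closedBall 0 1 ⊆ ⇑T ⁻¹' Ω ∧ ⇑T ⁻¹' Ω ⊆ Metric.closedBall 0 d := by
  classical
  obtain ⟨x₀, hx₀⟩ := hint
  obtain ⟨ε₀, hε₀, hball⟩ := Metric.isOpen_iff.1 isOpen_interior x₀ hx₀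
  have hballΩ : Metric.ball x₀ ε₀ ⊆ Ω := hball.trans interior_subset
  obtain ⟨R, hR⟩ := hcomp.isBounded.subset_closedBall 0
  set S : Set ((EuclideanSpace ℝ (Fin d) →L[ℝ] EuclideanSpace ℝ (Fin d))
      × EuclideanSpace ℝ (Fin d)) :=
    {p | ∀ x ∈ Metric.closedBall (0 : EuclideanSpace ℝ (Fin d)) 1, p.1 x + p.2 ∈ Ω}
    with hS_def
  have hSclosed : IsClosed S := by
    have hrw : S = ⋂ x ∈ Metric.closedBall (0 : EuclideanSpace ℝ (Fin d)) 1,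
        {p : (EuclideanSpace ℝ (Fin d) →L[ℝ] EuclideanSpace ℝ (Fin d))
          × EuclideanSpace ℝ (Fin d) | p.1 x + p.2 ∈ Ω} := by
      ext p; simp [hS_def]
    rw [hrw]
    refine isClosed_biInter fun x hx => ?_
    have hc : Continuous fun p : (EuclideanSpace ℝ (Fin d) →L[ℝ] EuclideanSpace ℝ (Fin d))
        × EuclideanSpace ℝ (Fin d) => p.1 x + p.2 :=
      (((ContinuousLinearMap.apply ℝ (EuclideanSpace ℝ (Fin d))) x).continuous.comp
        continuous_fst).add continuous_snd
    exact hcomp.isClosed.preimage hc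
  have hR0 : 0 ≤ R := by
    have : x₀ ∈ Metric.closedBall (0 : EuclideanSpace ℝ (Fin d)) R :=
      hR (hballΩ (mem_ball_self hε₀))
    rw [mem_closedBall, dist_zero_right] at this
    exact le_trans (norm_nonneg _) this
  have hSbdd : Bornology.IsBounded S := by
    apply (Metric.isBounded_closedBall (x := ((0 : EuclideanSpace ℝ (Fin d) →L[ℝ]
      EuclideanSpace ℝ (Fin d)), (0 : EuclideanSpace ℝ (Fin d)))) (r := 2 * R + 1)).subset
    intro p hp
    have hp2 : ‖p.2‖ ≤ R := by
      have h0 : p.1 0 + p.2 ∈ Ω := hp 0 (by simp)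
      rw [map_zero, zero_add] at h0
      have := hR h0
      rwa [mem_closedBall, dist_zero_right] at this
    have hp1 : ‖p.1‖ ≤ 2 * R := by
      apply ContinuousLinearMap.opNorm_le_bound _ (by linarith)
      intro x
      rcases eq_or_ne x 0 with h | h
      · simp [h]
      · have hxn : 0 < ‖x‖ := norm_pos_iff.2 h
        have hx' : (‖x‖⁻¹ • x) ∈ Metric.closedBall (0 : EuclideanSpace ℝ (Fin d)) 1 := by
          rw [mem_closedBall, dist_zero_right, norm_smul, norm_inv, norm_norm]
          rw [inv_mul_le_iff₀ hxn]; simp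
        have hmem := hp _ hx'
        have hb : ‖p.1 (‖x‖⁻¹ • x)‖ ≤ 2 * R := by
          have h1 : ‖p.1 (‖x‖⁻¹ • x) + p.2‖ ≤ R := by
            have := hR hmem; rwa [mem_closedBall, dist_zero_right] at this
          have h2 := norm_sub_le (p.1 (‖x‖⁻¹ • x) + p.2) p.2
          rw [add_sub_cancel_right] at h2
          linarith
        have heq : p.1 x = ‖x‖ • p.1 (‖x‖⁻¹ • x) := by
          rw [map_smul, smul_smul, mul_inv_cancel₀ hxn.ne', one_smul]
        rw [heq, norm_smul, norm_norm]
        calc ‖x‖ * ‖p.1 (‖x‖⁻¹ • x)‖ ≤ ‖x‖ * (2 * R) :=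
          mul_le_mul_of_nonneg_left hb (norm_nonneg _)
        _ = 2 * R * ‖x‖ := by ring
    rw [mem_closedBall, Prod.dist_eq]
    simp only [dist_zero_right]
    exact max_le (by linarith) (by linarith)
  have hScomp : IsCompact S := isCompact_of_isClosed_isBounded hSclosed hSbdd
  have hcandS : (((ε₀/2) • (1 : EuclideanSpace ℝ (Fin d) →L[ℝ] EuclideanSpace ℝ (Fin d)),
      x₀) : _ × _) ∈ S := by
    intro x hx
    rw [mem_closedBall, dist_zero_right] at hx
    apply hballΩ
    rw [mem_ball]
    simp only [ContinuousLinearMap.smul_apply, ContinuousLinearMap.one_apply]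
    rw [dist_eq_norm, add_sub_cancel_right, norm_smul, Real.norm_eq_abs,
      abs_of_pos (by linarith : (0:ℝ) < ε₀/2)]
    nlinarith
  have hfc : Continuous fun p : (EuclideanSpace ℝ (Fin d) →L[ℝ] EuclideanSpace ℝ (Fin d))
      × EuclideanSpace ℝ (Fin d) => |ContinuousLinearMap.det p.1| :=
    (ContinuousLinearMap.continuous_det.comp continuous_fst).abs
  obtain ⟨p₀, hp₀S, hp₀max⟩ := hScomp.exists_isMaxOn ⟨_, hcandS⟩ hfc.continuousOn
  have hcanddet : ContinuousLinearMap.det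
      ((ε₀/2) • (1 : EuclideanSpace ℝ (Fin d) →L[ℝ] EuclideanSpace ℝ (Fin d))) = (ε₀/2)^d := by
    rw [ContinuousLinearMap.det]
    rw [ContinuousLinearMap.coe_smul, ContinuousLinearMap.one_def]
    rw [LinearMap.det_smul]
    simp [finrank_euclideanSpace_fin, ContinuousLinearMap.coe_id]
  have hdet₀ : 0 < |ContinuousLinearMap.det p₀.1| := by
    have := hp₀max hcandS
    simp only [Set.mem_setOf_eq] at this
    calc (0:ℝ) < |(ε₀/2)^d| := by positivity
    _ = |ContinuousLinearMap.det ((ε₀/2) • (1 : EuclideanSpace ℝ (Fin d) →L[ℝ]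
        EuclideanSpace ℝ (Fin d)))| := by rw [hcanddet]
    _ ≤ _ := this
  have hdetne : ContinuousLinearMap.det p₀.1 ≠ 0 := abs_pos.1 hdet₀
  set L := p₀.1.toContinuousLinearEquivOfDetNeZero hdetne with hL_def
  set T : EuclideanSpace ℝ (Fin d) ≃ᵃ[ℝ] EuclideanSpace ℝ (Fin d) :=
    (L.toLinearEquiv.toAffineEquiv).trans (AffineEquiv.constVAdd ℝ _ p₀.2) with hT_def
  have hT : ∀ x, T x = p₀.1 x + p₀.2 := by
    intro x
    have hLx : L x = p₀.1 x := by
      rw [hL_def, ContinuousLinearMap.toContinuousLinearEquivOfDetNeZero_apply]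
    have happ : T x = p₀.2 + L x := rfl
    rw [happ, hLx, add_comm]
  have hB1 : Metric.closedBall (0 : EuclideanSpace ℝ (Fin d)) 1 ⊆ ⇑T ⁻¹' Ω := by
    intro x hx
    rw [Set.mem_preimage, hT x]
    exact hp₀S x hx
  refine ⟨T, hB1, ?_⟩
  intro z hz
  by_contra hzn
  rw [mem_closedBall, dist_zero_right, not_le] at hzn
  have hKconv : Convex ℝ (⇑T ⁻¹' Ω) := hconv.affine_preimage (T : EuclideanSpace ℝ (Fin d)
    →ᵃ[ℝ] EuclideanSpace ℝ (Fin d))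
  obtain ⟨N, w, hNK, hNdet⟩ := key_step hd _ hKconv hB1 hz hzn
  have hp'S : ((p₀.1.comp N, p₀.1 w + p₀.2) : _ × _) ∈ S := by
    intro x hx
    have hmem := hNK x hx
    rw [Set.mem_preimage, hT (N x + w), map_add] at hmem
    simpa [add_assoc] using hmem
  have hle := hp₀max hp'S
  simp only [Set.mem_setOf_eq] at hle
  have hcompdet : ContinuousLinearMap.det (p₀.1.comp N)
      = ContinuousLinearMap.det p₀.1 * LinearMap.det
        (N : EuclideanSpace ℝ (Fin d) →ₗ[ℝ] EuclideanSpace ℝ (Fin d)) := by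
    rw [ContinuousLinearMap.det, ContinuousLinearMap.toLinearMap_comp, LinearMap.det_comp]
  rw [hcompdet, abs_mul] at hle
  nlinarith [hdet₀, hNdet, hle]
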